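/- Let n > m ≥ 0 and define H(j,k) = (−1)^{b(j,k)} for j, k ∈ {0, …, 2ⁿ − 1}, where b(j,k) is the number of bit positions at which the binary expansions of j and k both have a 1. For 0 ≤ i ≤ 2^{n−m} − 1, let W_i be the span in ℝ^{2ⁿ−2^m} of the vectors (H(j, i·2^m + r))_{2^m ≤ j ≤ 2ⁿ−1} for 0 ≤ r ≤ 2^m − 1, and let P_i be the orthogonal projection onto W_i. Then for all i₁ ≠ i₂, trace(P_{i₁} ∘ P_{i₂}) = 2^m/(2^{n−m} − 1)². -/

import Mathlib

open scoped InnerProductSpace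

/-- `bitOverlap j k` is the number of bit positions at which the binary
expansions of `j` and `k` both have a `1`. -/
def bitOverlap (j k : ℕ) : ℕ := (Nat.land j k).bits.count true

def pc (x : ℕ) : ℕ := x.bits.count true

lemma pc_two_mul (x : ℕ) : pc (2 * x) = pc x := by
  rcases eq_or_ne x 0 with h | h
  · simp [h, pc]
  · simp [pc, Nat.bit0_bits x h]

lemma pc_two_mul_add_one (x : ℕ) : pc (2 * x + 1) = pc x + 1 := by
  simp [pc, Nat.bit1_bits x]

lemma mod2_and (a b : ℕ) : (a &&& b) % 2 = (a % 2) * (b % 2) := by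
  have h : (a &&& b) % 2 = 1 ↔ (a % 2 = 1 ∧ b % 2 = 1) := by
    simpa [Nat.testBit_zero] using Nat.testBit_and a b 0
  rcases Nat.mod_two_eq_zero_or_one a with h1 | h1 <;>
    rcases Nat.mod_two_eq_zero_or_one b with h2 | h2 <;> rw [h1, h2] <;> omega

lemma mod2_xor (a b : ℕ) : (a ^^^ b) % 2 = (a % 2 + b % 2) % 2 := by
  have h : (a ^^^ b) % 2 = (a + b) % 2 := by simp
  omega

lemma and_decomp (a b : ℕ) : a &&& b = 2 * ((a / 2) &&& (b / 2)) + (a % 2) * (b % 2) := by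
  have h1 : (a &&& b) / 2 = (a / 2) &&& (b / 2) := Nat.and_div_two
  have h2 := mod2_and a b
  omega

lemma xor_decomp (a b : ℕ) : a ^^^ b = 2 * ((a / 2) ^^^ (b / 2)) + (a % 2 + b % 2) % 2 := by
  have h1 : (a ^^^ b) / 2 = (a / 2) ^^^ (b / 2) := Nat.xor_div_two
  have h2 := mod2_xor a b
  omega

lemma neg_one_pc_xor (a : ℕ) : ∀ b : ℕ, ((-1 : ℝ)) ^ pc (a ^^^ b) = (-1) ^ pc a * (-1) ^ pc b := by
  induction a using Nat.strong_induction_on with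
  | _ a ih =>
    intro b
    rcases eq_or_ne a 0 with rfl | ha
    · simp [pc]
    rcases eq_or_ne b 0 with rfl | hb
    · simp [pc]
    have hq : a / 2 < a := Nat.div_lt_self (Nat.pos_of_ne_zero ha) one_lt_two
    have key := ih (a / 2) hq (b / 2)
    have hxd := xor_decomp a b
    rcases Nat.mod_two_eq_zero_or_one a with h1 | h1 <;>
      rcases Nat.mod_two_eq_zero_or_one b with h2 | h2
    · have e : a ^^^ b = 2 * (a / 2 ^^^ b / 2) := by omega
      have ea : a = 2 * (a / 2) := by omega
      have eb : b = 2 * (b / 2) := by omega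
      rw [e, pc_two_mul]
      conv_rhs => rw [ea, eb]
      rw [pc_two_mul, pc_two_mul, key]
    · have e : a ^^^ b = 2 * (a / 2 ^^^ b / 2) + 1 := by omega
      have ea : a = 2 * (a / 2) := by omega
      have eb : b = 2 * (b / 2) + 1 := by omega
      rw [e, pc_two_mul_add_one]
      conv_rhs => rw [ea, eb]
      rw [pc_two_mul, pc_two_mul_add_one, pow_succ, pow_succ, key]; ring
    · have e : a ^^^ b = 2 * (a / 2 ^^^ b / 2) + 1 := by omega
      have ea : a = 2 * (a / 2) + 1 := by omega
      have eb : b = 2 * (b / 2) := by omega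
      rw [e, pc_two_mul_add_one]
      conv_rhs => rw [ea, eb]
      rw [pc_two_mul, pc_two_mul_add_one, pow_succ, pow_succ, key]; ring
    · have e : a ^^^ b = 2 * (a / 2 ^^^ b / 2) := by omega
      have ea : a = 2 * (a / 2) + 1 := by omega
      have eb : b = 2 * (b / 2) + 1 := by omega
      rw [e, pc_two_mul]
      conv_rhs => rw [ea, eb]
      rw [pc_two_mul_add_one, pc_two_mul_add_one, pow_succ, pow_succ, key]; ring

lemma sum_range_two_mul {M : Type*} [AddCommMonoid M] (n : ℕ) (f : ℕ → M) :
    ∑ j ∈ Finset.range (2 * n), f j = ∑ q ∈ Finset.range n, (f (2 * q) + f (2 * q + 1)) := by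
  induction n with
  | zero => simp
  | succ n ih =>
    have h : 2 * (n + 1) = (2 * n + 1) + 1 := by ring
    rw [h, Finset.sum_range_succ, Finset.sum_range_succ, ih, Finset.sum_range_succ, add_assoc]

/-- The Walsh character sum. -/
lemma char_sum (N : ℕ) : ∀ d : ℕ, ∑ j ∈ Finset.range (2 ^ N), ((-1 : ℝ)) ^ pc (j &&& d) =
    if d % 2 ^ N = 0 then (2 : ℝ) ^ N else 0 := by
  induction N with
  | zero =>
    intro d
    simp [pc, Nat.mod_one]
  | succ N ih =>
    intro d
    have hr : Finset.range (2 ^ (N + 1)) = Finset.range (2 * 2 ^ N) := by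
      rw [pow_succ, mul_comm]
    rw [hr, sum_range_two_mul]
    have key : ∀ q, ((-1 : ℝ)) ^ pc (2 * q &&& d) + (-1) ^ pc ((2 * q + 1) &&& d) =
        (-1) ^ pc (q &&& (d / 2)) * (1 + (-1) ^ (d % 2)) := by
      intro q
      have h1 : 2 * q &&& d = 2 * (q &&& (d / 2)) := by
        have h := and_decomp (2 * q) d
        have e1 : 2 * q / 2 = q := by omega
        have e2 : 2 * q % 2 = 0 := by omega
        rw [e1, e2] at h; omega
      have h2 : (2 * q + 1) &&& d = 2 * (q &&& (d / 2)) + 1 * (d % 2) := by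
        have h := and_decomp (2 * q + 1) d
        have e1 : (2 * q + 1) / 2 = q := by omega
        have e2 : (2 * q + 1) % 2 = 1 := by omega
        rw [e1, e2] at h; omega
      rw [h1, h2, pc_two_mul]
      rcases Nat.mod_two_eq_zero_or_one d with h | h
      · rw [h]
        have e : 2 * (q &&& d / 2) + 1 * 0 = 2 * (q &&& d / 2) := by omega
        rw [e, pc_two_mul]
        norm_num
        ring
      · rw [h]
        have e : 2 * (q &&& d / 2) + 1 * 1 = 2 * (q &&& d / 2) + 1 := by omega
        rw [e, pc_two_mul_add_one]
        ring
    simp only [key, ← Finset.sum_mul, ih (d / 2)]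
    have hmm : d % 2 ^ (N + 1) = d % 2 + 2 * (d / 2 % 2 ^ N) := by
      rw [pow_succ, mul_comm]; exact Nat.mod_mul
    rcases Nat.mod_two_eq_zero_or_one d with h | h
    · by_cases h' : d / 2 % 2 ^ N = 0
      · rw [if_pos h', if_pos (show d % 2 ^ (N + 1) = 0 by omega), h]
        norm_num [pow_succ]
      · rw [if_neg h', if_neg (show ¬ d % 2 ^ (N + 1) = 0 by omega)]
        simp
    · rw [if_neg (show ¬ d % 2 ^ (N + 1) = 0 by omega), h]
      simp

lemma proj_formula {E : Type*} [NormedAddCommGroup E] [InnerProductSpace ℝ E]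
    {ι : Type*} [Fintype ι] [DecidableEq ι] (v : ι → E) (c : ℝ) (hc : c ≠ 0)
    (hv : ∀ r s, ⟪v r, v s⟫_ℝ = if r = s then c else 0)
    (K : Submodule ℝ E) [K.HasOrthogonalProjection]
    (hK : K = Submodule.span ℝ (Set.range v)) (x : E) :
    (K.orthogonalProjectionOnto x : E) = ∑ r, (⟪v r, x⟫_ℝ / c) • v r := by
  apply Submodule.eq_starProjection_of_mem_of_inner_eq_zero
  · rw [hK]
    exact Submodule.sum_mem _ fun r _ =>
      Submodule.smul_mem _ _ (Submodule.subset_span ⟨r, rfl⟩)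
  · intro w hw
    rw [hK] at hw
    induction hw using Submodule.span_induction with
    | mem w hwm =>
      obtain ⟨s, rfl⟩ := hwm
      rw [inner_sub_left, sum_inner]
      have hs : ∀ r ∈ Finset.univ, r ≠ s → ⟪(⟪v r, x⟫_ℝ / c) • v r, v s⟫_ℝ = 0 := by
        intro r _ hrs
        rw [real_inner_smul_left, hv r s, if_neg hrs, mul_zero]
      rw [Finset.sum_eq_single_of_mem s (Finset.mem_univ s) hs, real_inner_smul_left,
        hv s s, if_pos rfl, div_mul_cancel₀ _ hc, real_inner_comm, sub_self]
    | zero => rw [inner_zero_right]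
    | add w w' _ _ hw hw' => rw [inner_add_right, hw, hw', add_zero]
    | smul a w _ hw => rw [inner_smul_right, hw, mul_zero]

lemma trace_euclidean {ι : Type*} [Fintype ι] [DecidableEq ι]
    (f : EuclideanSpace ℝ ι →ₗ[ℝ] EuclideanSpace ℝ ι) :
    LinearMap.trace ℝ (EuclideanSpace ℝ ι) f = ∑ i, f (EuclideanSpace.single i 1) i := by
  rw [LinearMap.trace_eq_matrix_trace ℝ (EuclideanSpace.basisFun ι ℝ).toBasis]
  simp [Matrix.trace, Matrix.diag, LinearMap.toMatrix_apply]

lemma bitOverlap_eq (j k : ℕ) : bitOverlap j k = pc (j &&& k) := rfl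

lemma col_lt (n m : ℕ) (hmn : m ≤ n) (i r : ℕ) (hi : i < 2 ^ (n - m)) (hr : r < 2 ^ m) :
    i * 2 ^ m + r < 2 ^ n := by
  have hpow : 2 ^ (n - m) * 2 ^ m = 2 ^ n := by rw [← pow_add]; congr 1; omega
  calc i * 2 ^ m + r < (i + 1) * 2 ^ m := by rw [add_mul, one_mul]; omega
    _ ≤ 2 ^ (n - m) * 2 ^ m := Nat.mul_le_mul_right _ hi
    _ = 2 ^ n := hpow

lemma esum_apply {α : Type*} {ι : Type*} (s : Finset α) (f : α → EuclideanSpace ℝ ι) (j : ι) :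
    (∑ r ∈ s, f r) j = ∑ r ∈ s, f r j := by
  classical
  induction s using Finset.induction with
  | empty => rfl
  | insert _ _ h ih => rw [Finset.sum_insert h, Finset.sum_insert h, ← ih]; rfl

/-- The (restricted) Walsh--Hadamard column vectors. -/
def wvec (n m : ℕ) (i : Fin (2 ^ (n - m))) (r : Fin (2 ^ m)) :
    EuclideanSpace ℝ (Fin (2 ^ n - 2 ^ m)) :=
  WithLp.toLp 2 (fun j => (-1 : ℝ) ^ bitOverlap (j.val + 2 ^ m) (i.val * 2 ^ m + r.val))

lemma inner_wvec (n m : ℕ) (hmn : m < n) (i i' : Fin (2 ^ (n - m))) (r r' : Fin (2 ^ m)) :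
    ⟪wvec n m i r, wvec n m i' r'⟫_ℝ =
    (if i.val * 2 ^ m + r.val = i'.val * 2 ^ m + r'.val then (2 : ℝ) ^ n else 0) -
      (if r = r' then (2 : ℝ) ^ m else 0) := by
  have hc1lt : i.val * 2 ^ m + r.val < 2 ^ n := col_lt n m hmn.le _ _ i.isLt r.isLt
  have hc2lt : i'.val * 2 ^ m + r'.val < 2 ^ n := col_lt n m hmn.le _ _ i'.isLt r'.isLt
  set d := (i.val * 2 ^ m + r.val) ^^^ (i'.val * 2 ^ m + r'.val) with hd
  have step : ⟪wvec n m i r, wvec n m i' r'⟫_ℝ =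
      ∑ j : Fin (2 ^ n - 2 ^ m), (-1 : ℝ) ^ pc ((j.val + 2 ^ m) &&& d) := by
    rw [PiLp.inner_apply]
    refine Finset.sum_congr rfl fun j _ => ?_
    simp only [RCLike.inner_apply, conj_trivial, wvec, bitOverlap_eq, WithLp.ofLp_toLp]
    rw [hd, Nat.and_xor_distrib_left, neg_one_pc_xor, mul_comm]
  rw [step]
  rw [Fin.sum_univ_eq_sum_range (fun t => (-1 : ℝ) ^ pc ((t + 2 ^ m) &&& d)) (2 ^ n - 2 ^ m)]
  have h1 : ∑ t ∈ Finset.range (2 ^ n - 2 ^ m), (-1 : ℝ) ^ pc ((t + 2 ^ m) &&& d) =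
      ∑ J ∈ Finset.Ico (2 ^ m) (2 ^ n), (-1 : ℝ) ^ pc (J &&& d) := by
    rw [Finset.sum_Ico_eq_sum_range]
    exact Finset.sum_congr rfl fun t _ => by rw [Nat.add_comm]
  have hle : 2 ^ m ≤ 2 ^ n := Nat.pow_le_pow_right (by norm_num) (le_of_lt hmn)
  rw [h1, Finset.sum_Ico_eq_sub _ hle]
  have hdlt : d < 2 ^ n := Nat.xor_lt_two_pow hc1lt hc2lt
  have hfirst : ∑ J ∈ Finset.range (2 ^ n), (-1 : ℝ) ^ pc (J &&& d) =
      if i.val * 2 ^ m + r.val = i'.val * 2 ^ m + r'.val then (2 : ℝ) ^ n else 0 := by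
    rw [char_sum n d, Nat.mod_eq_of_lt hdlt]
    congr 1
    rw [eq_iff_iff, hd, xor_eq_zero_iff]
  have hmod : d % 2 ^ m = r.val ^^^ r'.val := by
    have hx : ∀ a b : ℕ, (a ^^^ b) % 2 ^ m = (a % 2 ^ m) ^^^ (b % 2 ^ m) := by
      intro a b
      apply Nat.eq_of_testBit_eq
      intro t
      simp only [Nat.testBit_xor, Nat.testBit_mod_two_pow]
      by_cases ht : t < m <;> simp [ht]
    have e1 : (i.val * 2 ^ m + r.val) % 2 ^ m = r.val := by
      rw [add_comm, mul_comm, Nat.add_mul_mod_self_left, Nat.mod_eq_of_lt r.isLt]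
    have e2 : (i'.val * 2 ^ m + r'.val) % 2 ^ m = r'.val := by
      rw [add_comm, mul_comm, Nat.add_mul_mod_self_left, Nat.mod_eq_of_lt r'.isLt]
    rw [hd, hx, e1, e2]
  have hsecond : ∑ J ∈ Finset.range (2 ^ m), (-1 : ℝ) ^ pc (J &&& d) =
      if r = r' then (2 : ℝ) ^ m else 0 := by
    have hcongr : ∀ J ∈ Finset.range (2 ^ m),
        (-1 : ℝ) ^ pc (J &&& d) = (-1 : ℝ) ^ pc (J &&& (d % 2 ^ m)) := by
      intro J hJ
      rw [Finset.mem_range] at hJ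
      congr 2
      apply Nat.eq_of_testBit_eq
      intro t
      simp only [Nat.testBit_and, Nat.testBit_mod_two_pow]
      by_cases ht : t < m
      · simp [ht]
      · have hf : J.testBit t = false :=
          Nat.testBit_lt_two_pow
            (lt_of_lt_of_le hJ (Nat.pow_le_pow_right (by norm_num) (by omega)))
        simp [hf]
    rw [Finset.sum_congr rfl hcongr, char_sum m (d % 2 ^ m), hmod,
      Nat.mod_eq_of_lt (Nat.xor_lt_two_pow r.isLt r'.isLt)]
    congr 1
    rw [eq_iff_iff, xor_eq_zero_iff]
    exact ⟨fun h => Fin.ext h, fun h => by rw [h]⟩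
  rw [hfirst, hsecond]

/-- For distinct subspaces `W_{i₁} ≠ W_{i₂}` in the Walsh–Hadamard fusion frame
construction, `trace(P_{i₁} ∘ P_{i₂}) = 2^m/(2^{n−m} − 1)²`. -/
theorem stmt_14 (n m : ℕ) (hmn : m < n)
    (W : Fin (2 ^ (n - m)) → Submodule ℝ (EuclideanSpace ℝ (Fin (2 ^ n - 2 ^ m))))
    (hW : ∀ i : Fin (2 ^ (n - m)),
      W i = Submodule.span ℝ (Set.range (fun r : Fin (2 ^ m) =>
        (WithLp.toLp 2 (fun j : Fin (2 ^ n - 2 ^ m) =>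
          ((-1 : ℝ) ^ bitOverlap (j.val + 2 ^ m) (i.val * 2 ^ m + r.val))) :
            EuclideanSpace ℝ (Fin (2 ^ n - 2 ^ m)))))) :
    ∀ i₁ i₂ : Fin (2 ^ (n - m)), i₁ ≠ i₂ →
      LinearMap.trace ℝ (EuclideanSpace ℝ (Fin (2 ^ n - 2 ^ m)))
          ((((W i₁).subtypeL.comp (Submodule.orthogonalProjectionOnto (W i₁))).comp
            ((W i₂).subtypeL.comp (Submodule.orthogonalProjectionOnto (W i₂)))).toLinearMap) =
        (2 ^ m : ℝ) / ((2 ^ (n - m) : ℝ) - 1) ^ 2 := by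
  intro i₁ i₂ hne
  have hWv : ∀ i, W i = Submodule.span ℝ (Set.range (wvec n m i)) := hW
  set c : ℝ := 2 ^ n - 2 ^ m with hcdef
  have hpowlt : (2 : ℝ) ^ m < 2 ^ n := by
    apply pow_lt_pow_right₀ (by norm_num) hmn
  have hc : c ≠ 0 := by rw [hcdef]; linarith
  -- orthogonality within each subspace
  have hdiag : ∀ i : Fin (2 ^ (n - m)), ∀ r s : Fin (2 ^ m),
      ⟪wvec n m i r, wvec n m i s⟫_ℝ = if r = s then c else 0 := by
    intro i r s
    rw [inner_wvec n m hmn]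
    by_cases hrs : r = s
    · subst hrs
      simp [hcdef]
    · have h1 : ¬ (i.val * 2 ^ m + r.val = i.val * 2 ^ m + s.val) := by
        intro h
        exact hrs (Fin.ext (by omega))
      simp [h1, hrs, Fin.val_inj]
  -- cross inner products
  have hcross : ∀ r s : Fin (2 ^ m),
      ⟪wvec n m i₁ r, wvec n m i₂ s⟫_ℝ = if r = s then -(2 : ℝ) ^ m else 0 := by
    intro r s
    rw [inner_wvec n m hmn]
    have h1 : ¬ (i₁.val * 2 ^ m + r.val = i₂.val * 2 ^ m + s.val) := by
      intro h
      have hr := r.isLt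
      have hs := s.isLt
      have : i₁.val = i₂.val := by
        rcases Nat.lt_trichotomy i₁.val i₂.val with hh | hh | hh
        · nlinarith
        · exact hh
        · nlinarith
      exact hne (Fin.ext this)
    rw [if_neg h1]
    by_cases hrs : r = s
    · rw [if_pos hrs, if_pos hrs]; ring
    · rw [if_neg hrs, if_neg hrs, sub_zero]
  -- projection formulas
  have hP1 : ∀ x, ((Submodule.orthogonalProjectionOnto (W i₁)) x : EuclideanSpace ℝ (Fin (2 ^ n - 2 ^ m))) =
      ∑ r, (⟪wvec n m i₁ r, x⟫_ℝ / c) • wvec n m i₁ r :=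
    fun x => proj_formula (wvec n m i₁) c hc (hdiag i₁) (W i₁) (hWv i₁) x
  have hP2 : ∀ x, ((Submodule.orthogonalProjectionOnto (W i₂)) x : EuclideanSpace ℝ (Fin (2 ^ n - 2 ^ m))) =
      ∑ r, (⟪wvec n m i₂ r, x⟫_ℝ / c) • wvec n m i₂ r :=
    fun x => proj_formula (wvec n m i₂) c hc (hdiag i₂) (W i₂) (hWv i₂) x
  rw [trace_euclidean]
  have happ : ∀ (j : Fin (2 ^ n - 2 ^ m)),
      ((((W i₁).subtypeL.comp (Submodule.orthogonalProjectionOnto (W i₁))).comp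
        ((W i₂).subtypeL.comp (Submodule.orthogonalProjectionOnto (W i₂)))).toLinearMap
          (EuclideanSpace.single j 1)) j =
      ∑ r : Fin (2 ^ m),
        (((wvec n m i₂ r j / c) * (-(2 : ℝ) ^ m)) / c) * wvec n m i₁ r j := by
    intro j
    have e0 : (((W i₁).subtypeL.comp (Submodule.orthogonalProjectionOnto (W i₁))).comp
        ((W i₂).subtypeL.comp (Submodule.orthogonalProjectionOnto (W i₂)))).toLinearMap
          (EuclideanSpace.single j 1) =
        ((Submodule.orthogonalProjectionOnto (W i₁))
          ((Submodule.orthogonalProjectionOnto (W i₂)) (EuclideanSpace.single j 1) :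
            EuclideanSpace ℝ (Fin (2 ^ n - 2 ^ m))) :
          EuclideanSpace ℝ (Fin (2 ^ n - 2 ^ m))) := rfl
    rw [e0, hP1, hP2]
    have e1 : ∀ r : Fin (2 ^ m),
        ⟪wvec n m i₁ r, ∑ s, (⟪wvec n m i₂ s, EuclideanSpace.single j 1⟫_ℝ / c) •
          wvec n m i₂ s⟫_ℝ = (wvec n m i₂ r j / c) * (-(2 : ℝ) ^ m) := by
      intro r
      rw [inner_sum]
      rw [Finset.sum_eq_single_of_mem r (Finset.mem_univ r)]
      · rw [real_inner_smul_right, hcross r r, if_pos rfl]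
        congr 2
        · simp [wvec, EuclideanSpace.inner_single_right]
      · intro s _ hsr
        rw [real_inner_smul_right, hcross r s, if_neg (Ne.symm hsr), mul_zero]
    simp only [e1]
    rw [esum_apply]
    rfl
  rw [Finset.sum_congr rfl (fun j _ => happ j)]
  rw [Finset.sum_comm]
  have hrow : ∀ r : Fin (2 ^ m),
      ∑ j : Fin (2 ^ n - 2 ^ m),
        (((wvec n m i₂ r j / c) * (-(2 : ℝ) ^ m)) / c) * wvec n m i₁ r j =
      ((-(2 : ℝ) ^ m) / (c * c)) * (-(2 : ℝ) ^ m) := by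
    intro r
    have : ∑ j : Fin (2 ^ n - 2 ^ m),
        (((wvec n m i₂ r j / c) * (-(2 : ℝ) ^ m)) / c) * wvec n m i₁ r j =
        ((-(2 : ℝ) ^ m) / (c * c)) * ∑ j, wvec n m i₁ r j * wvec n m i₂ r j := by
      rw [Finset.mul_sum]
      refine Finset.sum_congr rfl fun j _ => ?_
      field_simp
    rw [this]
    have hinner : ∑ j, wvec n m i₁ r j * wvec n m i₂ r j =
        ⟪wvec n m i₁ r, wvec n m i₂ r⟫_ℝ := by
      rw [PiLp.inner_apply]
      exact Finset.sum_congr rfl fun j _ => by simp [RCLike.inner_apply, conj_trivial, mul_comm]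
    rw [hinner, hcross r r, if_pos rfl]
  rw [Finset.sum_congr rfl (fun r _ => hrow r), Finset.sum_const, Finset.card_univ,
    Fintype.card_fin]
  have hcfac : c = 2 ^ m * ((2 : ℝ) ^ (n - m) - 1) := by
    rw [hcdef, mul_sub, mul_one, ← pow_add]
    congr 2
    omega
  have hden : (2 : ℝ) ^ (n - m) - 1 ≠ 0 := by
    have : (1 : ℝ) < 2 ^ (n - m) := one_lt_pow₀ (by norm_num) (by omega)
    linarith
  rw [hcfac]
  have h2m : (2 : ℝ) ^ m ≠ 0 := by positivity
  rw [nsmul_eq_mul, eq_div_iff (pow_ne_zero 2 hden)]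
  push_cast
  field_simp
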